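/- The genus-3 hyperelliptic Schur polynomial Sh_3 = e_3 e_2 e_1 + e_5 e_1 - e_4 e_1² - e_3², when expressed in power sums via Newton's identities, equals (1/45)(p_1⁶ - 5 p_1³ p_3 + 9 p_1 p_5 - 5 p_3²); in particular it depends only on the odd power sums p_1, p_3, p_5. -/

import Mathlib

open MvPolynomial

private lemma psum1 (n : ℕ) : psum (Fin n) ℚ 1 = esymm (Fin n) ℚ 1 := by
  rw [psum_eq_mul_esymm_sub_sum (Fin n) ℚ 1 one_pos]
  rw [show ({a ∈ Finset.HasAntidiagonal.antidiagonal 1 | a.1 ∈ Set.Ioo 0 1} : Finset (ℕ×ℕ)) = ∅ by decide]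
  simp

private lemma psum2 (n : ℕ) : psum (Fin n) ℚ 2 =
    esymm (Fin n) ℚ 1 * psum (Fin n) ℚ 1 - 2 * esymm (Fin n) ℚ 2 := by
  rw [psum_eq_mul_esymm_sub_sum (Fin n) ℚ 2 two_pos]
  rw [show ({a ∈ Finset.HasAntidiagonal.antidiagonal 2 | a.1 ∈ Set.Ioo 0 2} : Finset (ℕ×ℕ)) = {(1,1)} by decide]
  simp; ring

private lemma psum3 (n : ℕ) : psum (Fin n) ℚ 3 =
    esymm (Fin n) ℚ 1 * psum (Fin n) ℚ 2 - esymm (Fin n) ℚ 2 * psum (Fin n) ℚ 1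
      + 3 * esymm (Fin n) ℚ 3 := by
  rw [psum_eq_mul_esymm_sub_sum (Fin n) ℚ 3 three_pos]
  rw [show ({a ∈ Finset.HasAntidiagonal.antidiagonal 3 | a.1 ∈ Set.Ioo 0 3} : Finset (ℕ×ℕ)) = {(1,2),(2,1)} by decide]
  rw [Finset.sum_insert (by decide), Finset.sum_singleton]
  norm_num; ring

private lemma psum4 (n : ℕ) : psum (Fin n) ℚ 4 =
    esymm (Fin n) ℚ 1 * psum (Fin n) ℚ 3 - esymm (Fin n) ℚ 2 * psum (Fin n) ℚ 2
      + esymm (Fin n) ℚ 3 * psum (Fin n) ℚ 1 - 4 * esymm (Fin n) ℚ 4 := by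
  rw [psum_eq_mul_esymm_sub_sum (Fin n) ℚ 4 four_pos]
  rw [show ({a ∈ Finset.HasAntidiagonal.antidiagonal 4 | a.1 ∈ Set.Ioo 0 4} : Finset (ℕ×ℕ)) = {(1,3),(2,2),(3,1)} by decide]
  rw [Finset.sum_insert (by decide), Finset.sum_insert (by decide), Finset.sum_singleton]
  norm_num; ring

private lemma psum5 (n : ℕ) : psum (Fin n) ℚ 5 =
    esymm (Fin n) ℚ 1 * psum (Fin n) ℚ 4 - esymm (Fin n) ℚ 2 * psum (Fin n) ℚ 3
      + esymm (Fin n) ℚ 3 * psum (Fin n) ℚ 2 - esymm (Fin n) ℚ 4 * psum (Fin n) ℚ 1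
      + 5 * esymm (Fin n) ℚ 5 := by
  rw [psum_eq_mul_esymm_sub_sum (Fin n) ℚ 5 (by norm_num)]
  rw [show ({a ∈ Finset.HasAntidiagonal.antidiagonal 5 | a.1 ∈ Set.Ioo 0 5} : Finset (ℕ×ℕ)) = {(1,4),(2,3),(3,2),(4,1)} by decide]
  rw [Finset.sum_insert (by decide), Finset.sum_insert (by decide),
    Finset.sum_insert (by decide), Finset.sum_singleton]
  norm_num; ring

theorem schur3_in_psums (n : ℕ) :
    esymm (Fin n) ℚ 3 * esymm (Fin n) ℚ 2 * esymm (Fin n) ℚ 1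
        + esymm (Fin n) ℚ 5 * esymm (Fin n) ℚ 1
        - esymm (Fin n) ℚ 4 * esymm (Fin n) ℚ 1 ^ 2
        - esymm (Fin n) ℚ 3 ^ 2
      = C (1/45 : ℚ) * (psum (Fin n) ℚ 1 ^ 6
          - 5 * psum (Fin n) ℚ 1 ^ 3 * psum (Fin n) ℚ 3
          + 9 * psum (Fin n) ℚ 1 * psum (Fin n) ℚ 5
          - 5 * psum (Fin n) ℚ 3 ^ 2) := by
  have h45 : (45 : MvPolynomial (Fin n) ℚ) * C (1/45 : ℚ) = 1 := by
    rw [← map_ofNat (C : ℚ →+* MvPolynomial (Fin n) ℚ) 45, ← C_mul]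
    norm_num
  rw [psum5, psum4, psum3, psum2, psum1]
  linear_combination (-(esymm (Fin n) ℚ 3 * esymm (Fin n) ℚ 2 * esymm (Fin n) ℚ 1
        + esymm (Fin n) ℚ 5 * esymm (Fin n) ℚ 1
        - esymm (Fin n) ℚ 4 * esymm (Fin n) ℚ 1 ^ 2
        - esymm (Fin n) ℚ 3 ^ 2)) * h45
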